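/- In the (4, 3, 3) intersection construction, for every j with 2 ≤ j ≤ 4: ρ(A^(3)_{j,j}) = ρ(A^(4)_{j,j}) − δ_j, where δ_j = ρ(H^(4)|_{[j]}) − ρ(H^(4)|_{[j−1]}) and [t] = {1, …, t}. -/

import Mathlib

open scoped BigOperators
open Matrix

/-- Lemma 3a for `(4,3,3)`: in the intersection construction, writing
`δ_j = ρ(H⁽⁴⁾|_{[j]}) - ρ(H⁽⁴⁾|_{[j-1]})`, we have `ρ(A⁽³⁾_{j,j}) = ρ(A⁽⁴⁾_{j,j}) - δ_j`
for every thick-column index `j` (0-indexed `1 ≤ j ≤ 3`). -/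
theorem stmt8 (F : Type*) [Field F] (a : ℕ) (ha : 1 ≤ a)
    (H4 : Matrix (Fin 4 × Fin a) (Fin 4 × Fin a) F)
    -- diagonal blocks of H⁽⁴⁾ are the identity
    (hdiag : ∀ i : Fin 4, (Matrix.of fun x y : Fin a => H4 (i, x) (i, y))
        = (1 : Matrix (Fin a) (Fin a) F))
    -- `H3 j` is the `j`-th thick column of `H⁽³⁾`, with `c j` columns
    (c : Fin 4 → ℕ)
    (H3 : ∀ j : Fin 4, Matrix (Fin 4 × Fin a) (Fin (c j)) F)
    -- the columns of `H3 j` form a basis of `S(H⁽⁴⁾_j) ∩ S(H⁽⁴⁾|_{[j-1]})`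
    (hbasis : ∀ j : Fin 4, 1 ≤ (j : ℕ) →
      LinearIndependent F (fun l : Fin (c j) => (fun r => H3 j r l : (Fin 4 × Fin a) → F)) ∧
      Submodule.span F (Set.range (fun l : Fin (c j) => (fun r => H3 j r l : (Fin 4 × Fin a) → F)))
        = Submodule.span F
            (Set.range (fun y : Fin a => (fun r => H4 r (j, y) : (Fin 4 × Fin a) → F)))
          ⊓ Submodule.span F
            (Set.range (fun p : {p : Fin 4 × Fin a // (p.1 : ℕ) < (j : ℕ)} =>
              (fun r => H4 r p.val : (Fin 4 × Fin a) → F)))) :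
    ∀ j : Fin 4, 1 ≤ (j : ℕ) →
      ((Matrix.of fun (x : Fin a) (l : Fin (c j)) => H3 j (j, x) l).rank : ℤ)
        = ((Matrix.of fun x y : Fin a => H4 (j, x) (j, y)).rank : ℤ)
          - (((H4.submatrix id
                (fun p : {p : Fin 4 × Fin a // (p.1 : ℕ) < (j : ℕ) + 1} =>
                  (p : Fin 4 × Fin a))).rank : ℤ)
            - ((H4.submatrix id
                (fun p : {p : Fin 4 × Fin a // (p.1 : ℕ) < (j : ℕ)} =>
                  (p : Fin 4 × Fin a))).rank : ℤ)) := by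
  intro j hj
  classical
  obtain ⟨hind, hspan⟩ := hbasis j hj
  -- entries of the diagonal block
  have hent : ∀ x y : Fin a, H4 (j, x) (j, y) = if x = y then 1 else 0 := by
    intro x y
    have := congrFun (congrFun (hdiag j) x) y
    simpa [Matrix.one_apply] using this
  -- the projection to the j-th row block
  set g : ((Fin 4 × Fin a) → F) →ₗ[F] (Fin a → F) :=
    LinearMap.funLeft F F (fun x : Fin a => ((j, x) : Fin 4 × Fin a)) with hg
  set V := Submodule.span F
      (Set.range (fun y : Fin a => (fun r => H4 r (j, y) : (Fin 4 × Fin a) → F))) with hVdef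
  set W := Submodule.span F
      (Set.range (fun p : {p : Fin 4 × Fin a // (p.1 : ℕ) < (j : ℕ)} =>
        (fun r => H4 r p.val : (Fin 4 × Fin a) → F))) with hWdef
  -- g is injective on V
  have hVker : ∀ v ∈ V, g v = 0 → v = 0 := by
    intro v hv hgv
    obtain ⟨d, hd⟩ := (Submodule.mem_span_range_iff_exists_fun F).mp hv
    have hd0 : ∀ x, d x = 0 := by
      intro x
      have h1 : v (j, x) = 0 := congrFun hgv x
      have h2 := congrFun hd (j, x)
      simp only [Finset.sum_apply, Pi.smul_apply, smul_eq_mul, hent, mul_ite, mul_one,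
        mul_zero, Finset.sum_ite_eq, Finset.mem_univ, if_true] at h2
      rw [h1] at h2
      exact h2
    rw [← hd]
    simp [hd0]
  have hdisjV : Disjoint V (LinearMap.ker g) := by
    rw [Submodule.disjoint_def]
    intro v hv hvker
    exact hVker v hv (LinearMap.mem_ker.mp hvker)
  -- the family spanning V is linearly independent
  have hindV : LinearIndependent F
      (fun y : Fin a => (fun r => H4 r (j, y) : (Fin 4 × Fin a) → F)) := by
    rw [Fintype.linearIndependent_iff]
    intro d hd x
    have h2 := congrFun hd (j, x)
    simpa [Finset.sum_apply, hent, mul_ite, Finset.sum_ite_eq] using h2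
  have hfinV : Module.finrank F V = a := by
    rw [hVdef, finrank_span_eq_card hindV, Fintype.card_fin]
  -- the intersection has dimension c j
  have hfinVW : Module.finrank F ((V ⊓ W : Submodule F ((Fin 4 × Fin a) → F))) = c j := by
    rw [← hspan, finrank_span_eq_card hind, Fintype.card_fin]
  -- rank of A³_{jj} equals c j
  have hind2 : LinearIndependent F
      (g ∘ fun l : Fin (c j) => (fun r => H3 j r l : (Fin 4 × Fin a) → F)) := by
    apply hind.map
    rw [hspan]
    exact Disjoint.mono_left inf_le_left hdisjV
  have hA3 : (Matrix.of fun (x : Fin a) (l : Fin (c j)) => H3 j (j, x) l).rank = c j := by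
    rw [Matrix.rank_eq_finrank_span_cols]
    have hT : (Matrix.of fun (x : Fin a) (l : Fin (c j)) => H3 j (j, x) l)ᵀ
        = (g ∘ fun l : Fin (c j) => (fun r => H3 j r l : (Fin 4 × Fin a) → F)) := rfl
    change Module.finrank F (Submodule.span F (Set.range (Matrix.of fun (x : Fin a) (l : Fin (c j)) => H3 j (j, x) l)ᵀ)) = c j
    rw [hT, finrank_span_eq_card hind2, Fintype.card_fin]
  -- rank of A⁴_{jj} equals a
  have hA4 : (Matrix.of fun x y : Fin a => H4 (j, x) (j, y)).rank = a := by
    rw [hdiag j, Matrix.rank_one, Fintype.card_fin]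
  -- rank of restriction to [j-1]
  have hWrank : (H4.submatrix id
      (fun p : {p : Fin 4 × Fin a // (p.1 : ℕ) < (j : ℕ)} => (p : Fin 4 × Fin a))).rank
      = Module.finrank F W := by
    rw [Matrix.rank_eq_finrank_span_cols]
    rfl
  -- rank of restriction to [j]
  have hUrank : (H4.submatrix id
      (fun p : {p : Fin 4 × Fin a // (p.1 : ℕ) < (j : ℕ) + 1} => (p : Fin 4 × Fin a))).rank
      = Module.finrank F ((V ⊔ W : Submodule F ((Fin 4 × Fin a) → F))) := by
    have hrange : Set.range (H4.submatrix id
        (fun p : {p : Fin 4 × Fin a // (p.1 : ℕ) < (j : ℕ) + 1} => (p : Fin 4 × Fin a)))ᵀ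
        = (Set.range (fun y : Fin a => (fun r => H4 r (j, y) : (Fin 4 × Fin a) → F)))
          ∪ (Set.range (fun p : {p : Fin 4 × Fin a // (p.1 : ℕ) < (j : ℕ)} =>
              (fun r => H4 r p.val : (Fin 4 × Fin a) → F))) := by
      ext v
      constructor
      · rintro ⟨⟨p, hp⟩, rfl⟩
        by_cases hpj : (p.1 : ℕ) = (j : ℕ)
        · left
          have hp1 : p.1 = j := Fin.ext hpj
          refine ⟨p.2, ?_⟩
          funext r
          show H4 r (j, p.2) = H4 r p
          rw [← hp1]
        · right
          exact ⟨⟨p, by omega⟩, rfl⟩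
      · rintro (⟨y, rfl⟩ | ⟨⟨p, hp⟩, rfl⟩)
        · exact ⟨⟨(j, y), Nat.lt_succ_self (j : ℕ)⟩, rfl⟩
        · exact ⟨⟨p, by omega⟩, rfl⟩
    have hsp : Submodule.span F (Set.range (H4.submatrix id
        (fun p : {p : Fin 4 × Fin a // (p.1 : ℕ) < (j : ℕ) + 1} => (p : Fin 4 × Fin a)))ᵀ)
        = V ⊔ W := by
      rw [hrange, Submodule.span_union, hVdef, hWdef]
    rw [Matrix.rank_eq_finrank_span_cols]
    change Module.finrank F (Submodule.span F (Set.range (H4.submatrix id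
        (fun p : {p : Fin 4 × Fin a // (p.1 : ℕ) < (j : ℕ) + 1} => (p : Fin 4 × Fin a)))ᵀ)) = _
    rw [hsp]
  -- dimension formula
  have hdim := Submodule.finrank_sup_add_finrank_inf_eq V W
  rw [hA3, hA4, hWrank, hUrank]
  rw [hfinV, hfinVW] at hdim
  omega
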